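/- In the P3 setup, let S denote the P3-feasible set and let S' denote the relaxed feasible set defined by the same constraints except that the ramping constraint |g − g_prev| ≤ r·g_max is removed. Suppose additionally that C is nondecreasing on [0, g_max] and differentiable there with 0 ≤ C'(x) ≤ C'_max for all x ∈ [0, g_max], that 0 ≤ p_b ≤ p_{b,max}, and that p_s ≥ 0. Then for every ũ ∈ S' there exists û ∈ S such that f(û) ≤ f(ũ) + V·(1 − r)·g_max·max(p_{b,max}, C'_max). In particular, since S ⊆ S', the infima satisfy inf_{S'} f ≤ inf_S f ≤ inf_{S'} f + V·(1 − r)·g_max·max(p_{b,max}, C'_max). -/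

import Mathlib

/-- A control action `u = (x₁,…,x_N, l_m, g, e_b, e_s)` in the per-slot problem P3. -/
structure Ctrl (N : ℕ) where
  x : Fin N → ℝ
  lm : ℝ
  g : ℝ
  eb : ℝ
  es : ℝ

/-- P3-feasibility of a control action. -/
def P3Feasible {N : ℕ} (a xmin xmax : Fin N → ℝ) (lb lf gmax gprev r : ℝ)
    (u : Ctrl N) : Prop :=
  lb ≤ u.lm ∧ u.lm ≤ lb + lf ∧
  (∀ i, xmin i ≤ u.x i ∧ u.x i ≤ xmax i ∧ u.x i ≤ a i) ∧
  0 ≤ u.g ∧ u.g ≤ gmax ∧ |u.g - gprev| ≤ r * gmax ∧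
  0 ≤ u.eb ∧ 0 ≤ u.es ∧
  u.g + u.eb + ∑ i, (a i - u.x i) = u.es + u.lm

/-- The P3 objective
`f(u) = Σᵢ [V·Dᵢ(xᵢ) + (sᵢ − βᵢ)·xᵢ] + V·C(g) + V·p_b·e_b − V·p_s·e_s − (J/l_f)·l_m`. -/
noncomputable def P3Obj {N : ℕ} (s β : Fin N → ℝ) (D : Fin N → ℝ → ℝ) (C : ℝ → ℝ)
    (V pb ps J lf : ℝ) (u : Ctrl N) : ℝ :=
  (∑ i, (V * D i (u.x i) + (s i - β i) * u.x i)) + V * C u.g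
    + V * pb * u.eb - V * ps * u.es - (J / lf) * u.lm

/-- Relaxed feasibility: same constraints as `P3Feasible` with the ramping constraint
`|g − g_prev| ≤ r·g_max` removed. -/
def P3FeasibleRelaxed {N : ℕ} (a xmin xmax : Fin N → ℝ) (lb lf gmax : ℝ)
    (u : Ctrl N) : Prop :=
  lb ≤ u.lm ∧ u.lm ≤ lb + lf ∧
  (∀ i, xmin i ≤ u.x i ∧ u.x i ≤ xmax i ∧ u.x i ≤ a i) ∧
  0 ≤ u.g ∧ u.g ≤ gmax ∧
  0 ≤ u.eb ∧ 0 ≤ u.es ∧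
  u.g + u.eb + ∑ i, (a i - u.x i) = u.es + u.lm

set_option maxHeartbeats 2000000 in
/-- Lemma 5: removing the ramping constraint lowers the optimal value of
P3 by at most `ε = V·(1−r)·g_max·max(p_{b,max}, C'_max)`. -/
theorem stmt11 (N : ℕ) (a s β xmin xmax : Fin N → ℝ)
    (lb lf pb ps J gmax gprev r V : ℝ)
    (D : Fin N → ℝ → ℝ) (C : ℝ → ℝ)
    (ha : ∀ i, 0 ≤ a i) (hlb : 0 ≤ lb) (hlf : 0 < lf) (hJ : 0 ≤ J)
    (hxmin : ∀ i, xmin i < 0) (hxmax : ∀ i, 0 < xmax i)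
    (hgmax : 0 < gmax) (hgprev : gprev ∈ Set.Icc 0 gmax)
    (hr : r ∈ Set.Icc (0 : ℝ) 1) (hV : 0 < V)
    (C'max pbmax : ℝ)
    (hCmono : MonotoneOn C (Set.Icc 0 gmax))
    (hCdiff : ∀ x ∈ Set.Icc (0 : ℝ) gmax, DifferentiableAt ℝ C x)
    (hC'0 : ∀ x ∈ Set.Icc (0 : ℝ) gmax, 0 ≤ deriv C x)
    (hC'max : ∀ x ∈ Set.Icc (0 : ℝ) gmax, deriv C x ≤ C'max)
    (hpb0 : 0 ≤ pb) (hpb : pb ≤ pbmax) (hps : 0 ≤ ps) :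
    (∀ ut : Ctrl N, P3FeasibleRelaxed a xmin xmax lb lf gmax ut →
      ∃ uh : Ctrl N, P3Feasible a xmin xmax lb lf gmax gprev r uh ∧
        P3Obj s β D C V pb ps J lf uh
          ≤ P3Obj s β D C V pb ps J lf ut + V * (1 - r) * gmax * max pbmax C'max) ∧
    sInf (P3Obj s β D C V pb ps J lf '' {u | P3FeasibleRelaxed a xmin xmax lb lf gmax u})
      ≤ sInf (P3Obj s β D C V pb ps J lf '' {u | P3Feasible a xmin xmax lb lf gmax gprev r u}) ∧
    sInf (P3Obj s β D C V pb ps J lf '' {u | P3Feasible a xmin xmax lb lf gmax gprev r u})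
      ≤ sInf (P3Obj s β D C V pb ps J lf '' {u | P3FeasibleRelaxed a xmin xmax lb lf gmax u})
        + V * (1 - r) * gmax * max pbmax C'max := by
  obtain ⟨hgp0, hgp1⟩ := hgprev
  obtain ⟨hr0, hr1⟩ := hr
  set M := max pbmax C'max with hM
  have hpbmax : 0 ≤ pbmax := hpb0.trans hpb
  have h0mem : (0 : ℝ) ∈ Set.Icc (0 : ℝ) gmax := ⟨le_refl _, hgmax.le⟩
  have hCm0 : 0 ≤ C'max := (hC'0 0 h0mem).trans (hC'max 0 h0mem)
  have hM0 : 0 ≤ M := hpbmax.trans (le_max_left _ _)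
  have h1r : 0 ≤ (1 - r) * gmax := mul_nonneg (by linarith) hgmax.le
  have hε : 0 ≤ V * (1 - r) * gmax * M :=
    mul_nonneg (mul_nonneg (mul_nonneg hV.le (by linarith)) hgmax.le) hM0
  have hrg : 0 ≤ r * gmax := mul_nonneg hr0 hgmax.le
  have key : ∀ ut : Ctrl N, P3FeasibleRelaxed a xmin xmax lb lf gmax ut →
      ∃ uh : Ctrl N, P3Feasible a xmin xmax lb lf gmax gprev r uh ∧
        P3Obj s β D C V pb ps J lf uh
          ≤ P3Obj s β D C V pb ps J lf ut + V * (1 - r) * gmax * M := by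
    intro ut hut
    obtain ⟨h1, h2, h3, h4, h5, h6, h7, h8⟩ := hut
    by_cases hA : |ut.g - gprev| ≤ r * gmax
    · exact ⟨ut, ⟨h1, h2, h3, h4, h5, hA, h6, h7, h8⟩, by linarith⟩
    · rcases lt_abs.mp (not_le.mp hA) with hB | hC
      · -- ut.g > gprev + r*gmax : clip down, buy the shortfall
        set gh := gprev + r * gmax with hgh
        set δ := ut.g - gh with hδ
        have hδ0 : 0 ≤ δ := by simp only [hδ, hgh]; linarith
        have hghle : gh ≤ gmax := by simp only [hgh]; linarith
        have hgh0 : 0 ≤ gh := by simp only [hgh]; linarith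
        have hδle : δ ≤ (1 - r) * gmax := by simp only [hδ, hgh]; nlinarith
        refine ⟨⟨ut.x, ut.lm, gh, ut.eb + δ, ut.es⟩,
          ⟨h1, h2, h3, hgh0, hghle, ?_, ?_, h7, ?_⟩, ?_⟩
        · show |gh - gprev| ≤ r * gmax
          rw [show gh - gprev = r * gmax by rw [hgh]; ring, abs_of_nonneg hrg]
        · show (0:ℝ) ≤ ut.eb + δ
          linarith
        · show gh + (ut.eb + δ) + ∑ i, (a i - ut.x i) = ut.es + ut.lm
          have hq : gh + (ut.eb + δ) = ut.g + ut.eb := by rw [hδ]; ring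
          linarith [h8]
        · simp only [P3Obj]
          have hCle : C gh ≤ C ut.g := hCmono ⟨hgh0, hghle⟩ ⟨h4, h5⟩ (by linarith)
          have f1 : pb * δ ≤ pbmax * ((1 - r) * gmax) :=
            mul_le_mul hpb hδle hδ0 hpbmax
          have f2 : pbmax * ((1 - r) * gmax) ≤ M * ((1 - r) * gmax) :=
            mul_le_mul_of_nonneg_right (le_max_left _ _) h1r
          have f4 : V * (pb * δ) ≤ V * (M * ((1 - r) * gmax)) :=
            mul_le_mul_of_nonneg_left (f1.trans f2) hV.le
          have f5 : V * C gh ≤ V * C ut.g := mul_le_mul_of_nonneg_left hCle hV.le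
          nlinarith [f4, f5]
      · -- ut.g < gprev - r*gmax : clip up, sell the excess
        have hC' : r * gmax < gprev - ut.g := by linarith
        set gh := gprev - r * gmax with hgh
        set δ := gh - ut.g with hδ
        have hδ0 : 0 < δ := by simp only [hδ, hgh]; linarith
        have hghle : gh ≤ gmax := by simp only [hgh]; linarith
        have hgh0 : 0 ≤ gh := by simp only [hgh]; linarith
        have hδle : δ ≤ (1 - r) * gmax := by simp only [hδ, hgh]; nlinarith
        have hlt : ut.g < gh := by linarith
        have hsub : Set.Icc ut.g gh ⊆ Set.Icc 0 gmax := Set.Icc_subset_Icc h4 hghle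
        have hcont : ContinuousOn C (Set.Icc ut.g gh) := fun x hx =>
          (hCdiff x (hsub hx)).continuousAt.continuousWithinAt
        have hderiv : ∀ x ∈ Set.Ioo ut.g gh, HasDerivAt C (deriv C x) x := fun x hx =>
          (hCdiff x (hsub (Set.Ioo_subset_Icc_self hx))).hasDerivAt
        obtain ⟨c, hc, hceq⟩ := exists_hasDerivAt_eq_slope C (deriv C) hlt hcont hderiv
        have hslope : C gh - C ut.g ≤ C'max * (gh - ut.g) := by
          have h := hC'max c (hsub (Set.Ioo_subset_Icc_self hc))
          rw [hceq] at h
          have := (div_le_iff₀ (by linarith : (0:ℝ) < gh - ut.g)).mp h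
          linarith
        refine ⟨⟨ut.x, ut.lm, gh, ut.eb, ut.es + δ⟩,
          ⟨h1, h2, h3, hgh0, hghle, ?_, h6, ?_, ?_⟩, ?_⟩
        · show |gh - gprev| ≤ r * gmax
          rw [show gh - gprev = -(r * gmax) by rw [hgh]; ring, abs_neg, abs_of_nonneg hrg]
        · show (0:ℝ) ≤ ut.es + δ
          linarith
        · show gh + ut.eb + ∑ i, (a i - ut.x i) = (ut.es + δ) + ut.lm
          have hq : gh = ut.g + δ := by rw [hδ]; ring
          linarith [h8]
        · simp only [P3Obj]
          have f1 : C gh - C ut.g ≤ C'max * δ := by simpa [hδ] using hslope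
          have f2 : C'max * δ ≤ C'max * ((1 - r) * gmax) :=
            mul_le_mul_of_nonneg_left hδle hCm0
          have f3 : C'max * ((1 - r) * gmax) ≤ M * ((1 - r) * gmax) :=
            mul_le_mul_of_nonneg_right (le_max_right _ _) h1r
          have f4 : 0 ≤ V * (ps * δ) :=
            mul_nonneg hV.le (mul_nonneg hps hδ0.le)
          have f5 : V * (C gh - C ut.g) ≤ V * (M * ((1 - r) * gmax)) :=
            mul_le_mul_of_nonneg_left (f1.trans (f2.trans f3)) hV.le
          nlinarith [f4, f5]
  refine ⟨key, ?_⟩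
  set F := P3Obj s β D C V pb ps J lf with hF
  set Sf := F '' {u | P3Feasible a xmin xmax lb lf gmax gprev r u} with hSf
  set Sr := F '' {u | P3FeasibleRelaxed a xmin xmax lb lf gmax u} with hSr
  have hsubset : {u : Ctrl N | P3Feasible a xmin xmax lb lf gmax gprev r u} ⊆
      {u | P3FeasibleRelaxed a xmin xmax lb lf gmax u} := by
    rintro u ⟨h1, h2, h3, h4, h5, _, h6, h7, h8⟩
    exact ⟨h1, h2, h3, h4, h5, h6, h7, h8⟩
  have himsub : Sf ⊆ Sr := Set.image_mono hsubset
  -- a feasible point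
  have hSfne : Sf.Nonempty := by
    set t := lb - gprev - ∑ i, a i with ht
    refine ⟨F ⟨fun _ => 0, lb, gprev, max t 0, max (-t) 0⟩,
      ⟨fun _ => 0, lb, gprev, max t 0, max (-t) 0⟩,
      ⟨le_refl _, by linarith, fun i => ⟨(hxmin i).le, (hxmax i).le, ha i⟩,
        hgp0, hgp1, by simpa using hrg, le_max_right _ _, le_max_right _ _, ?_⟩, rfl⟩
    show gprev + max t 0 + ∑ i, (a i - 0) = max (-t) 0 + lb
    have hmt : max t 0 - max (-t) 0 = t := by
      rcases le_total t 0 with h | h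
      · rw [max_eq_right h, max_eq_left (by linarith)]; ring
      · rw [max_eq_left h, max_eq_right (by linarith)]; ring
    simp only [sub_zero]
    have : gprev + (max t 0 - max (-t) 0) + ∑ i, a i = lb := by rw [hmt, ht]; ring
    linarith
  have hSrne : Sr.Nonempty := hSfne.mono himsub
  by_cases hbdd : BddBelow Sf
  · have hbddr : BddBelow Sr := by
      obtain ⟨m, hm⟩ := hbdd
      refine ⟨m - V * (1 - r) * gmax * M, ?_⟩
      rintro y ⟨u, hu, rfl⟩
      obtain ⟨uh, hh, hle⟩ := key u hu
      have := hm ⟨uh, hh, rfl⟩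
      linarith
    have hineq1 : sInf Sr ≤ sInf Sf := csInf_le_csInf hbddr hSfne himsub
    have hineq2 : sInf Sf ≤ sInf Sr + V * (1 - r) * gmax * M := by
      have hlbd : ∀ y ∈ Sr, sInf Sf - V * (1 - r) * gmax * M ≤ y := by
        rintro y ⟨u, hu, rfl⟩
        obtain ⟨uh, hh, hle⟩ := key u hu
        have := csInf_le hbdd (⟨uh, hh, rfl⟩ : F uh ∈ Sf)
        linarith
      have := le_csInf hSrne hlbd
      linarith
    exact ⟨hineq1, hineq2⟩
  · have hbddr : ¬ BddBelow Sr := fun h => hbdd (h.mono himsub)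
    rw [Real.sInf_of_not_bddBelow hbdd, Real.sInf_of_not_bddBelow hbddr]
    exact ⟨le_refl _, by linarith⟩
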